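/- Let γ_0,…,γ_n be nonzero complex numbers with γ_k² pairwise distinct and P(w) = Σ_{m=−n−4}^{n+4} c_m w^m. Then c_n + c_{n+2} Σ_{k=0}^n γ_k² + c_{n+4}( Σ_{k=0}^n γ_k⁴ + Σ_{0≤j<k≤n} γ_j²γ_k² ) = (c_{−n−2} + c_{−n−4} Σ_{j=0}^n γ_j^{−2}) (−1)^{n+1} / ∏_{k=0}^n γ_k² + (1/2) Σ_{k=0}^{n} γ_k^n (P(γ_k) + (−1)^n P(−γ_k)) / ∏_{j≠k}(γ_k²−γ_j²). -/

import Mathlib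

open Finset Polynomial

lemma lagrange_coeff (n : ℕ) (x : Fin (n + 1) → ℂ) (hx : Function.Injective x)
    (f : Polynomial ℂ) (hf : f.degree < ((n : ℕ) + 1 : ℕ)) :
    ∑ k, f.eval (x k) / ∏ j ∈ univ.erase k, (x k - x j) = f.coeff n := by
  classical
  have hinj : Set.InjOn x ↑(univ : Finset (Fin (n+1))) := hx.injOn
  have hcard : #(univ : Finset (Fin (n+1))) = n + 1 := by simp
  have hfi := Lagrange.eq_interpolate hinj (by rw [hcard]; exact_mod_cast hf)
  have hco : f.coeff n = ((Lagrange.interpolate univ x fun i => eval (x i) f)).coeff n := by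
    rw [← hfi]
  rw [hco, Lagrange.interpolate_apply, finset_sum_coeff]
  refine Finset.sum_congr rfl fun k _ => ?_
  have hb : (Lagrange.basis univ x k).coeff n = ∏ j ∈ univ.erase k, (x k - x j)⁻¹ := by
    have hdeg : (Lagrange.basis univ x k).natDegree = n := by
      rw [Lagrange.natDegree_basis hinj (mem_univ k), hcard]; omega
    have hlc : (Lagrange.basis univ x k).coeff n
        = (Lagrange.basis univ x k).leadingCoeff := by
      rw [leadingCoeff, hdeg]
    rw [hlc]
    unfold Lagrange.basis
    rw [leadingCoeff_prod]
    refine Finset.prod_congr rfl fun j hj => ?_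
    unfold Lagrange.basisDivisor
    rw [leadingCoeff_mul, leadingCoeff_C, leadingCoeff_X_sub_C, mul_one]
  rw [coeff_C_mul, hb, div_eq_mul_inv, prod_inv_distrib]

variable {n : ℕ} {x : Fin (n + 1) → ℂ}

lemma prod_neg_eq (s : Finset (Fin (n+1))) : ∏ i ∈ s, (-x i) = (-1)^s.card * ∏ i ∈ s, x i := by
  rw [← Finset.prod_const (-1 : ℂ), ← Finset.prod_mul_distrib]
  simp

local notation "Q" => Lagrange.nodal (univ : Finset (Fin (n+1))) x

lemma Q_natDeg : (Q).natDegree = n + 1 := by rw [Lagrange.natDegree_nodal]; simp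

lemma Q_coeff_top : (Q).coeff (n+1) = 1 := by
  have h := Lagrange.nodal_monic (s := (univ : Finset (Fin (n+1)))) (v := x)
  rw [Monic, leadingCoeff, Q_natDeg] at h
  exact h

lemma Q_coeff_gt {m : ℕ} (hm : n + 1 < m) : (Q).coeff m = 0 := by
  apply coeff_eq_zero_of_natDegree_lt
  rw [Q_natDeg]; exact hm

lemma Q_coeff_n : (Q).coeff n = -∑ k, x k := by
  have h := prod_X_sub_C_nextCoeff (s := (univ : Finset (Fin (n+1)))) x
  rw [← Lagrange.nodal_eq, nextCoeff, Q_natDeg, if_neg (by simp)] at h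
  simpa using h

lemma XQ_coeff_n : (X * Q).coeff n = ∑ t ∈ powersetCard 2 (univ : Finset (Fin (n+1))), ∏ i ∈ t, x i := by
  cases n with
  | zero =>
      rw [coeff_X_mul_zero]
      rw [show (powersetCard 2 (univ : Finset (Fin 1))) = ∅ from ?_, sum_empty]
      exact Finset.powersetCard_eq_empty.mpr (by simp)
  | succ m =>
      rw [coeff_X_mul]
      have h := Finset.prod_X_add_C_coeff (univ : Finset (Fin (m+2))) (fun i => -x i)
        (k := m) (by simp)
      simp only [map_neg, ← sub_eq_add_neg] at h
      rw [← Lagrange.nodal_eq] at h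
      have hc : #(univ : Finset (Fin (m+2))) - m = 2 := by simp
      rw [hc] at h
      rw [h]
      refine Finset.sum_congr rfl fun t ht => ?_
      have htc : t.card = 2 := (Finset.mem_powersetCard.mp ht).2
      rw [prod_neg_eq, htc]
      norm_num

lemma pair_bridge : ∑ t ∈ powersetCard 2 (univ : Finset (Fin (n+1))), ∏ i ∈ t, x i
    = ∑ p ∈ univ.filter (fun p : Fin (n+1) × Fin (n+1) => p.1 < p.2), x p.1 * x p.2 := by
  rw [show powersetCard 2 (univ : Finset (Fin (n+1)))
      = (univ.filter (fun p : Fin (n+1) × Fin (n+1) => p.1 < p.2)).image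
          (fun p => ({p.1, p.2} : Finset (Fin (n+1)))) from ?_]
  rw [Finset.sum_image ?_]
  · refine Finset.sum_congr rfl fun p hp => ?_
    simp only [mem_filter, mem_univ, true_and] at hp
    rw [Finset.prod_pair hp.ne]
  · intro p hp q hq h
    simp only [mem_coe, mem_filter, mem_univ, true_and] at hp hq
    have h2 := congrArg (fun (s : Finset (Fin (n+1))) => (s : Set (Fin (n+1)))) h
    simp only [Finset.coe_insert, Finset.coe_singleton] at h2
    rcases Set.pair_eq_pair_iff.mp h2 with ⟨ha, hb⟩ | ⟨ha, hb⟩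
    · exact Prod.ext ha hb
    · rw [ha, hb] at hp
      exact absurd hp (lt_asymm hq)
  · ext t
    simp only [Finset.mem_powersetCard_univ, Finset.mem_image, mem_filter, mem_univ, true_and]
    constructor
    · intro ht
      obtain ⟨a, b, hab, rfl⟩ := Finset.card_eq_two.mp ht
      rcases lt_or_gt_of_ne hab with hlt | hlt
      · exact ⟨(a, b), hlt, rfl⟩
      · exact ⟨(b, a), hlt, by rw [Finset.pair_comm]⟩
    · rintro ⟨p, hp, rfl⟩
      exact Finset.card_pair hp.ne

lemma sq_sum_eq : (∑ k, x k) * (∑ k, x k)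
    = ∑ k, x k ^ 2 + 2 * ∑ p ∈ univ.filter (fun p : Fin (n+1) × Fin (n+1) => p.1 < p.2),
        x p.1 * x p.2 := by
  classical
  have h0 : (∑ k, x k) * (∑ k, x k)
      = ∑ p ∈ (univ : Finset (Fin (n+1) × Fin (n+1))), x p.1 * x p.2 := by
    rw [Finset.sum_mul_sum, ← Finset.univ_product_univ, Finset.sum_product]
  have h1 := Finset.sum_filter_add_sum_filter_not (univ : Finset (Fin (n+1) × Fin (n+1)))
    (fun p => p.1 < p.2) (fun p => x p.1 * x p.2)
  have h2 := Finset.sum_filter_add_sum_filter_not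
    ((univ : Finset (Fin (n+1) × Fin (n+1))).filter (fun p => ¬ p.1 < p.2))
    (fun p => p.2 < p.1) (fun p => x p.1 * x p.2)
  rw [Finset.filter_filter, Finset.filter_filter] at h2
  have e1 : (univ : Finset (Fin (n+1) × Fin (n+1))).filter (fun p => ¬p.1 < p.2 ∧ p.2 < p.1)
      = univ.filter (fun p => p.2 < p.1) := by
    apply Finset.filter_congr; intro p _
    exact ⟨fun h => h.2, fun h => ⟨lt_asymm h, h⟩⟩
  have e2 : (univ : Finset (Fin (n+1) × Fin (n+1))).filter (fun p => ¬p.1 < p.2 ∧ ¬p.2 < p.1)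
      = univ.filter (fun p => p.1 = p.2) := by
    apply Finset.filter_congr; intro p _
    constructor
    · rintro ⟨h1', h2'⟩; exact le_antisymm (not_lt.mp h2') (not_lt.mp h1')
    · rintro h; rw [h]; simp
  rw [e1, e2] at h2
  have e3 : ∑ p ∈ (univ : Finset (Fin (n+1) × Fin (n+1))).filter (fun p => p.2 < p.1),
      x p.1 * x p.2 = ∑ p ∈ univ.filter (fun p : Fin (n+1) × Fin (n+1) => p.1 < p.2),
      x p.1 * x p.2 := by
    apply Finset.sum_nbij' (i := Prod.swap) (j := Prod.swap)
    · intro a ha; simp only [mem_filter, mem_univ, true_and] at *; exact ha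
    · intro a ha; simp only [mem_filter, mem_univ, true_and] at *; exact ha
    · intro a _; simp
    · intro a _; simp
    · intro a _; simp [mul_comm]
  have e4 : ∑ p ∈ (univ : Finset (Fin (n+1) × Fin (n+1))).filter (fun p => p.1 = p.2),
      x p.1 * x p.2 = ∑ k, x k ^ 2 := by
    apply Finset.sum_nbij' (i := fun p => p.1) (j := fun k => (k, k))
    · intro a _; simp
    · intro a _; simp
    · intro a ha; simp only [mem_filter, mem_univ, true_and] at ha
      exact Prod.ext rfl ha
    · intro a _; rfl
    · intro a ha; simp only [mem_filter, mem_univ, true_and] at ha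
      rw [← ha, sq]
  rw [h0, ← h1, ← h2, e3, e4]
  ring

noncomputable def shiftz (P : Polynomial ℂ) (s M : ℕ) : Polynomial ℂ :=
  ∑ i ∈ Finset.range M, C (P.coeff (i + s)) * X ^ i

lemma shiftz_coeff (P : Polynomial ℂ) (s M m : ℕ) :
    (shiftz P s M).coeff m = if m < M then P.coeff (m + s) else 0 := by
  rw [shiftz, finset_sum_coeff]
  simp only [coeff_C_mul, coeff_X_pow, mul_ite, mul_one, mul_zero]
  rw [Finset.sum_ite_eq (Finset.range M) m (fun i => P.coeff (i + s))]
  simp [Finset.mem_range]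

lemma shiftz_eval (P : Polynomial ℂ) (s M : ℕ) (y : ℂ) :
    y ^ s * (shiftz P s M).eval y = ∑ i ∈ Finset.range M, P.coeff (i + s) * y ^ (i + s) := by
  rw [shiftz, eval_finset_sum, Finset.mul_sum]
  refine Finset.sum_congr rfl fun i _ => ?_
  simp [pow_add]
  ring

lemma S_pow (hx : Function.Injective x) {m : ℕ} (hm : m ≤ n) :
    ∑ k, x k ^ m / ∏ j ∈ univ.erase k, (x k - x j) = if m = n then 1 else 0 := by
  have h := lagrange_coeff n x hx (X ^ m)
    (by rw [degree_X_pow]; exact_mod_cast Nat.lt_succ_of_le hm)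
  simp only [eval_pow, eval_X, coeff_X_pow] at h
  rw [h]
  by_cases hmn : m = n <;> simp [hmn, Ne.symm]

lemma S_e1 (hx : Function.Injective x) :
    ∑ k, x k ^ (n+1) / ∏ j ∈ univ.erase k, (x k - x j) = ∑ k, x k := by
  have hdeg : ((X : Polynomial ℂ) ^ (n+1) - Q).degree < ((n : ℕ) + 1 : ℕ) := by
    rw [degree_lt_iff_coeff_zero]
    intro m hm
    rcases eq_or_lt_of_le hm with hm' | hm'
    · rw [coeff_sub, coeff_X_pow, if_pos hm'.symm, ← hm', Q_coeff_top]; ring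
    · rw [coeff_sub, coeff_X_pow, if_neg (by omega), Q_coeff_gt hm']; ring
  have h := lagrange_coeff n x hx _ hdeg
  rw [show ((X : Polynomial ℂ) ^ (n+1) - Q).coeff n = ∑ k, x k from ?_] at h
  · rw [← h]
    refine Finset.sum_congr rfl fun k _ => ?_
    rw [eval_sub, eval_pow, eval_X, Lagrange.eval_nodal_at_node (mem_univ k), sub_zero]
  · rw [coeff_sub, coeff_X_pow, if_neg (by omega), Q_coeff_n]; ring

lemma S_h2 (hx : Function.Injective x) :
    ∑ k, x k ^ (n+2) / ∏ j ∈ univ.erase k, (x k - x j)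
      = ∑ k, x k ^ 2
        + ∑ p ∈ univ.filter (fun p : Fin (n+1) × Fin (n+1) => p.1 < p.2), x p.1 * x p.2 := by
  set e1 : ℂ := ∑ k, x k with he1
  have hcg : ∀ m : ℕ, (((X : Polynomial ℂ) + C e1) * Q).coeff m
      = ((X : Polynomial ℂ) * Q).coeff m + e1 * (Q).coeff m := by
    intro m; rw [add_mul, coeff_add, coeff_C_mul]
  have hdeg : ((X : Polynomial ℂ) ^ (n+2) - ((X : Polynomial ℂ) + C e1) * Q).degree
      < ((n : ℕ) + 1 : ℕ) := by
    rw [degree_lt_iff_coeff_zero]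
    intro m hm
    rw [coeff_sub, hcg]
    rcases eq_or_lt_of_le hm with hm' | hm'
    · rw [← hm', coeff_X_pow, if_neg (by omega)]
      simp only [coeff_X_mul]
      rw [Q_coeff_n, Q_coeff_top]; ring
    · obtain ⟨j, rfl⟩ := Nat.exists_eq_add_of_lt hm'
      have hxq : ((X : Polynomial ℂ) * Q).coeff (n + 1 + j + 1) = (Q).coeff (n + 1 + j) := by
        rw [coeff_X_mul]
      rw [hxq]
      rcases Nat.eq_zero_or_pos j with hj | hj
      · subst hj
        rw [coeff_X_pow, if_pos (by omega), Q_coeff_top, Q_coeff_gt (by omega)]; ring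
      · rw [coeff_X_pow, if_neg (by omega), Q_coeff_gt (by omega), Q_coeff_gt (by omega)]; ring
  have h := lagrange_coeff n x hx _ hdeg
  have hev : ∀ k, eval (x k) ((X : Polynomial ℂ) ^ (n+2) - ((X : Polynomial ℂ) + C e1) * Q)
      = x k ^ (n+2) := by
    intro k
    rw [eval_sub, eval_pow, eval_X, eval_mul, Lagrange.eval_nodal_at_node (mem_univ k)]
    ring
  have hcn : ((X : Polynomial ℂ) ^ (n+2) - ((X : Polynomial ℂ) + C e1) * Q).coeff n
      = ∑ k, x k ^ 2
        + ∑ p ∈ univ.filter (fun p : Fin (n+1) × Fin (n+1) => p.1 < p.2), x p.1 * x p.2 := by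
    rw [coeff_sub, hcg, coeff_X_pow, if_neg (by omega), XQ_coeff_n, pair_bridge, Q_coeff_n]
    have := sq_sum_eq (n := n) (x := x)
    rw [← he1] at this
    linear_combination this
  rw [← hcn, ← h]
  exact Finset.sum_congr rfl fun k _ => by rw [hev]

lemma a0_eq : (Q).coeff 0 = (-1)^(n+1) * ∏ k, x k := by
  rw [coeff_zero_eq_eval_zero, Lagrange.eval_nodal]
  simp only [zero_sub]
  rw [prod_neg_eq]
  simp

lemma a1_eq (hx0 : ∀ k, x k ≠ 0) :
    (Q).coeff 1 = (-1)^n * (∏ k, x k) * ∑ j, (x j)⁻¹ := by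
  have h0 : (Q).coeff 1 = (Polynomial.derivative (Q)).coeff 0 := by
    rw [coeff_derivative]; simp
  rw [h0, coeff_zero_eq_eval_zero, Lagrange.derivative_nodal, eval_finset_sum]
  have : ∀ j : Fin (n+1), eval 0 (Lagrange.nodal (univ.erase j) x)
      = (-1)^n * ((∏ k, x k) * (x j)⁻¹) := by
    intro j
    rw [Lagrange.eval_nodal]
    simp only [zero_sub]
    rw [prod_neg_eq, Finset.card_erase_of_mem (mem_univ j)]
    have hcard : #(univ : Finset (Fin (n+1))) - 1 = n := by simp
    rw [hcard]
    congr 1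
    have hme := Finset.mul_prod_erase univ x (mem_univ j)
    rw [← hme, mul_comm (x j), mul_assoc, mul_inv_cancel₀ (hx0 j), mul_one]
  rw [Finset.sum_congr rfl fun j _ => this j, ← Finset.mul_sum, Finset.mul_sum, Finset.mul_sum]
  refine Finset.sum_congr rfl fun j _ => by ring

lemma S_neg1 (hx : Function.Injective x) (hx0 : ∀ k, x k ≠ 0) :
    ∑ k, (x k)⁻¹ / ∏ j ∈ univ.erase k, (x k - x j) = (-1)^n / ∏ k, x k := by
  have hdeg : (shiftz Q 1 (n+2)).degree < ((n : ℕ) + 1 : ℕ) := by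
    rw [degree_lt_iff_coeff_zero]
    intro m hm
    rw [shiftz_coeff]
    split
    · exact Q_coeff_gt (by omega)
    · rfl
  have hev : ∀ k, eval (x k) (shiftz Q 1 (n+2)) = -((Q).coeff 0) * (x k)⁻¹ := by
    intro k
    have h1 : x k * eval (x k) (shiftz Q 1 (n+2)) = -((Q).coeff 0) := by
      have hs1 := shiftz_eval Q 1 (n+2) (x k)
      rw [pow_one] at hs1
      rw [hs1]
      have hQe : (Q).eval (x k) = ∑ i ∈ Finset.range (n+3), (Q).coeff i * x k ^ i :=
        eval_eq_sum_range' (by rw [Q_natDeg]; omega) _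
      have hs := Finset.sum_range_succ' (fun i => (Q).coeff i * x k ^ i) (n+2)
      rw [← hQe, Lagrange.eval_nodal_at_node (mem_univ k)] at hs
      simp only [pow_zero, mul_one] at hs
      linear_combination -hs
    rw [← h1, mul_comm (x k), mul_assoc, mul_inv_cancel₀ (hx0 k), mul_one]
  have h := lagrange_coeff n x hx _ hdeg
  rw [shiftz_coeff, if_pos (by omega), Q_coeff_top] at h
  have h2 : -((Q).coeff 0) * ∑ k, (x k)⁻¹ / ∏ j ∈ univ.erase k, (x k - x j) = 1 := by
    rw [Finset.mul_sum, ← h]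
    exact Finset.sum_congr rfl fun k _ => by rw [hev, mul_div_assoc]
  have h3 := eq_inv_of_mul_eq_one_right h2
  rw [a0_eq, pow_succ] at h3
  rw [h3, show -((-1:ℂ)^n * -1 * ∏ k, x k) = (-1)^n * ∏ k, x k by ring, mul_inv,
    ← inv_pow, inv_neg, inv_one, div_eq_mul_inv]

lemma S_neg2 (hx : Function.Injective x) (hx0 : ∀ k, x k ≠ 0) :
    ∑ k, ((x k)^2)⁻¹ / ∏ j ∈ univ.erase k, (x k - x j)
      = (-1)^n * (∑ j, (x j)⁻¹) / ∏ k, x k := by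
  have hdeg : (shiftz Q 2 (n+2)).degree < ((n : ℕ) + 1 : ℕ) := by
    rw [degree_lt_iff_coeff_zero]
    intro m hm
    rw [shiftz_coeff]
    split
    · exact Q_coeff_gt (by omega)
    · rfl
  have hev : ∀ k, eval (x k) (shiftz Q 2 (n+2))
      = -((Q).coeff 0) * ((x k)^2)⁻¹ - (Q).coeff 1 * (x k)⁻¹ := by
    intro k
    have h1 : x k ^ 2 * eval (x k) (shiftz Q 2 (n+2))
        = -((Q).coeff 0) - (Q).coeff 1 * x k := by
      rw [shiftz_eval Q 2 (n+2) (x k)]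
      have hQe : (Q).eval (x k) = ∑ i ∈ Finset.range (n+4), (Q).coeff i * x k ^ i :=
        eval_eq_sum_range' (by rw [Q_natDeg]; omega) _
      have hs := Finset.sum_range_succ' (fun i => (Q).coeff i * x k ^ i) (n+3)
      have hs' := Finset.sum_range_succ' (fun i => (Q).coeff (i+1) * x k ^ (i+1)) (n+2)
      rw [← hQe, Lagrange.eval_nodal_at_node (mem_univ k)] at hs
      rw [hs'] at hs
      simp only [pow_zero, mul_one, pow_one, zero_add] at hs
      have : ∀ i ∈ Finset.range (n+2), (Q).coeff (i+1+1) * x k ^ (i+1+1)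
          = (Q).coeff (i+2) * x k ^ (i+2) := by intro i _; norm_num
      rw [Finset.sum_congr rfl this] at hs
      linear_combination -hs
    have hx2 : (x k)^2 ≠ 0 := pow_ne_zero 2 (hx0 k)
    have hrhs : -((Q).coeff 0) * ((x k)^2)⁻¹ - (Q).coeff 1 * (x k)⁻¹
        = (-((Q).coeff 0) - (Q).coeff 1 * x k) / (x k ^ 2) := by
      field_simp [hx0 k]
    rw [hrhs, eq_div_iff hx2, mul_comm]
    exact h1
  have h := lagrange_coeff n x hx _ hdeg
  rw [shiftz_coeff, if_pos (by omega), Q_coeff_gt (by omega)] at h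
  have h2 : -((Q).coeff 0) * (∑ k, ((x k)^2)⁻¹ / ∏ j ∈ univ.erase k, (x k - x j))
      - (Q).coeff 1 * ∑ k, (x k)⁻¹ / ∏ j ∈ univ.erase k, (x k - x j) = 0 := by
    rw [Finset.mul_sum, Finset.mul_sum, ← Finset.sum_sub_distrib, ← h]
    exact Finset.sum_congr rfl fun k _ => by rw [hev, sub_div, mul_div_assoc, mul_div_assoc]
  rw [S_neg1 hx hx0, a0_eq, a1_eq hx0] at h2
  have hP : (∏ k, x k) ≠ 0 := Finset.prod_ne_zero_iff.mpr fun k _ => hx0 k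
  rcases Nat.even_or_odd n with hpar | hpar
  · rw [hpar.neg_one_pow] at h2 ⊢
    rw [pow_succ, hpar.neg_one_pow] at h2
    field_simp at h2 ⊢
    linear_combination h2
  · rw [hpar.neg_one_pow] at h2 ⊢
    rw [pow_succ, hpar.neg_one_pow] at h2
    field_simp at h2 ⊢
    linear_combination -h2

/-- The Laurent polynomial `P(w) = ∑_{m=-N}^{N} c_m w^m`. -/
noncomputable def LaurentP (c : ℤ → ℂ) (N : ℕ) (w : ℂ) : ℂ :=
  ∑ m ∈ Finset.Icc (-(N : ℤ)) (N : ℤ), c m * w ^ m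

lemma step1 (n : ℕ) (γ : ℂ) (hγ : γ ≠ 0) (c : ℤ → ℂ) :
    γ ^ n * (LaurentP c (n + 4) γ + (-1) ^ n * LaurentP c (n + 4) (-γ))
      = 2 * ∑ t ∈ Finset.Icc (-2 : ℤ) ((n : ℤ) + 2), c (2 * t - n) * (γ ^ 2) ^ t := by
  have expand : γ ^ n * (LaurentP c (n + 4) γ + (-1) ^ n * LaurentP c (n + 4) (-γ))
      = ∑ m ∈ Finset.Icc (-((n:ℤ)+4)) ((n:ℤ)+4),
          γ ^ n * (c m * γ ^ m + (-1)^n * (c m * (-γ) ^ m)) := by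
    have hN : ((n + 4 : ℕ) : ℤ) = (n:ℤ) + 4 := by push_cast; ring
    rw [LaurentP, LaurentP, hN]
    rw [Finset.mul_sum, ← Finset.sum_add_distrib, Finset.mul_sum]
  rw [expand]
  have hsub : (Finset.Icc (-2 : ℤ) ((n:ℤ)+2)).image (fun t => 2*t - (n:ℤ))
      ⊆ Finset.Icc (-((n:ℤ)+4)) ((n:ℤ)+4) := by
    intro m hm
    simp only [Finset.mem_image, Finset.mem_Icc] at *
    obtain ⟨t, ht, rfl⟩ := hm
    omega
  have hvan : ∀ m ∈ Finset.Icc (-((n:ℤ)+4)) ((n:ℤ)+4),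
      m ∉ (Finset.Icc (-2 : ℤ) ((n:ℤ)+2)).image (fun t => 2*t - (n:ℤ)) →
      γ ^ n * (c m * γ ^ m + (-1)^n * (c m * (-γ) ^ m)) = 0 := by
    intro m hm hnot
    rw [Finset.mem_Icc] at hm
    have hpar : ¬ Even ((n : ℤ) + m) := by
      rintro ⟨r, hr⟩
      apply hnot
      simp only [Finset.mem_image, Finset.mem_Icc]
      exact ⟨r, ⟨by omega, by omega⟩, by omega⟩
    rcases Int.even_or_odd m with hm2 | hm2
    · have hodd : Odd n := by
        rcases Nat.even_or_odd n with h | h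
        · obtain ⟨r, hr⟩ := h
          obtain ⟨s, hs⟩ := hm2
          exact absurd ⟨(r : ℤ) + s, by omega⟩ hpar
        · exact h
      rw [hm2.neg_zpow, hodd.neg_one_pow]
      ring
    · have heven : Even n := by
        rcases Nat.even_or_odd n with h | h
        · exact h
        · obtain ⟨r, hr⟩ := h
          obtain ⟨s, hs⟩ := hm2
          exact absurd ⟨(r : ℤ) + s + 1, by omega⟩ hpar
      rw [hm2.neg_zpow, heven.neg_one_pow]
      ring
  rw [← Finset.sum_subset hsub hvan,
    Finset.sum_image (by intro a _ b _ h; have h' : 2*a - (n:ℤ) = 2*b - n := h; omega)]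
  rw [Finset.mul_sum]
  refine Finset.sum_congr rfl fun t ht => ?_
  have hpow : γ ^ n * γ ^ (2*t - (n:ℤ)) = (γ^2) ^ t := by
    rw [← zpow_natCast γ n, ← zpow_add₀ hγ, show (n:ℤ) + (2*t - (n:ℤ)) = 2*t by ring,
      zpow_mul, show ((2:ℤ)) = ((2:ℕ):ℤ) from rfl, zpow_natCast]
  rcases Nat.even_or_odd n with hn | hn
  · have hme : Even (2*t - (n:ℤ)) := by
      obtain ⟨r, hr⟩ := hn
      exact ⟨t - r, by omega⟩
    rw [hme.neg_zpow, hn.neg_one_pow]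
    linear_combination (2 * c (2*t - n)) * hpow
  · have hmo : Odd (2*t - (n:ℤ)) := by
      obtain ⟨r, hr⟩ := hn
      refine ⟨t - r - 1, by omega⟩
    rw [hmo.neg_zpow, hn.neg_one_pow]
    linear_combination (2 * c (2*t - n)) * hpow

theorem residue_sum_identity_deg4 (n : ℕ) (γ : Fin (n + 1) → ℂ)
    (hγ0 : ∀ k, γ k ≠ 0)
    (hγ : ∀ j k, j ≠ k → γ j ^ 2 ≠ γ k ^ 2)
    (c : ℤ → ℂ) :
    c (n : ℤ) + c ((n : ℤ) + 2) * ∑ k, γ k ^ 2 +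
        c ((n : ℤ) + 4) * ((∑ k, γ k ^ 4) +
          ∑ p ∈ univ.filter (fun p : Fin (n + 1) × Fin (n + 1) => p.1 < p.2),
            γ p.1 ^ 2 * γ p.2 ^ 2)
      = (c (-(n : ℤ) - 2) + c (-(n : ℤ) - 4) * ∑ j, γ j ^ (-2 : ℤ)) *
          (-1) ^ (n + 1) / ∏ k, γ k ^ 2 +
        (1 / 2) * ∑ k, γ k ^ n *
          (LaurentP c (n + 4) (γ k) + (-1) ^ n * LaurentP c (n + 4) (-γ k)) /
          ∏ j ∈ univ.erase k, (γ k ^ 2 - γ j ^ 2) := by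
  classical
  set x : Fin (n + 1) → ℂ := fun k => γ k ^ 2 with hxdef
  have hx0 : ∀ k, x k ≠ 0 := fun k => pow_ne_zero 2 (hγ0 k)
  have hx : Function.Injective x := by
    intro j k h
    by_contra hne
    exact hγ j k hne h
  have hxk : ∀ k, x k = γ k ^ 2 := fun k => rfl
  -- rewrite the big sum
  have hhalf : (1 / 2 : ℂ) * ∑ k, γ k ^ n *
      (LaurentP c (n + 4) (γ k) + (-1) ^ n * LaurentP c (n + 4) (-γ k)) /
        ∏ j ∈ univ.erase k, (x k - x j)
      = ∑ t ∈ Finset.Icc (-2 : ℤ) ((n : ℤ) + 2), c (2 * t - n) *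
          ∑ k, x k ^ t / ∏ j ∈ univ.erase k, (x k - x j) := by
    rw [Finset.mul_sum]
    have hterm : ∀ k : Fin (n+1), (1 / 2 : ℂ) * (γ k ^ n *
        (LaurentP c (n + 4) (γ k) + (-1) ^ n * LaurentP c (n + 4) (-γ k)) /
          ∏ j ∈ univ.erase k, (x k - x j))
        = ∑ t ∈ Finset.Icc (-2 : ℤ) ((n : ℤ) + 2), c (2 * t - n) *
            (x k ^ t / ∏ j ∈ univ.erase k, (x k - x j)) := by
      intro k
      rw [step1 n (γ k) (hγ0 k) c]
      rw [show (2 : ℂ) * (∑ t ∈ Finset.Icc (-2 : ℤ) ((n : ℤ) + 2), c (2 * t - n) * (γ k ^ 2) ^ t)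
          = 2 * ∑ t ∈ Finset.Icc (-2 : ℤ) ((n : ℤ) + 2), c (2 * t - n) * (x k) ^ t from rfl]
      rw [mul_div_assoc, Finset.sum_div, Finset.mul_sum, Finset.mul_sum]
      exact Finset.sum_congr rfl fun t _ => by rw [mul_div_assoc]; ring
    rw [Finset.sum_congr rfl fun k _ => hterm k, Finset.sum_comm]
    exact Finset.sum_congr rfl fun t _ => by rw [Finset.mul_sum]
  -- values of the inner sums
  have hSn : ∑ k, x k ^ ((n : ℤ)) / ∏ j ∈ univ.erase k, (x k - x j) = 1 := by
    have h := S_pow (x := x) hx (le_refl n)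
    rw [if_pos rfl] at h
    rw [← h]
    exact Finset.sum_congr rfl fun k _ => by rw [zpow_natCast]
  have hSn1 : ∑ k, x k ^ ((n : ℤ) + 1) / ∏ j ∈ univ.erase k, (x k - x j) = ∑ k, x k := by
    rw [← S_e1 (x := x) hx]
    refine Finset.sum_congr rfl fun k _ => ?_
    rw [show ((n : ℤ) + 1) = ((n + 1 : ℕ) : ℤ) by push_cast; ring, zpow_natCast]
  have hSn2 : ∑ k, x k ^ ((n : ℤ) + 2) / ∏ j ∈ univ.erase k, (x k - x j)
      = ∑ k, x k ^ 2 + ∑ p ∈ univ.filter (fun p : Fin (n + 1) × Fin (n + 1) => p.1 < p.2),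
          x p.1 * x p.2 := by
    rw [← S_h2 (x := x) hx]
    refine Finset.sum_congr rfl fun k _ => ?_
    rw [show ((n : ℤ) + 2) = ((n + 2 : ℕ) : ℤ) by push_cast; ring, zpow_natCast]
  have hSneg1 : ∑ k, x k ^ (-1 : ℤ) / ∏ j ∈ univ.erase k, (x k - x j)
      = (-1)^n / ∏ k, x k := by
    rw [← S_neg1 (x := x) hx hx0]
    exact Finset.sum_congr rfl fun k _ => by rw [zpow_neg_one]
  have hSneg2 : ∑ k, x k ^ (-2 : ℤ) / ∏ j ∈ univ.erase k, (x k - x j)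
      = (-1)^n * (∑ j, (x j)⁻¹) / ∏ k, x k := by
    rw [← S_neg2 (x := x) hx hx0]
    refine Finset.sum_congr rfl fun k _ => ?_
    rw [show (-2 : ℤ) = -((2 : ℕ) : ℤ) from rfl, zpow_neg, zpow_natCast]
  have hSm : ∀ s : ℕ, s < n → ∑ k, x k ^ ((s : ℤ)) / ∏ j ∈ univ.erase k, (x k - x j) = 0 := by
    intro s hs
    have h := S_pow (x := x) hx (le_of_lt hs)
    rw [if_neg (by omega)] at h
    rw [← h]
    exact Finset.sum_congr rfl fun k _ => by rw [zpow_natCast]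
  -- reduce the t-sum to five terms
  have hs5 : ∑ t ∈ Finset.Icc (-2 : ℤ) ((n : ℤ) + 2), c (2 * t - n) *
      ∑ k, x k ^ t / ∏ j ∈ univ.erase k, (x k - x j)
      = ∑ t ∈ ({-2, -1, (n : ℤ), (n : ℤ) + 1, (n : ℤ) + 2} : Finset ℤ), c (2 * t - n) *
      ∑ k, x k ^ t / ∏ j ∈ univ.erase k, (x k - x j) := by
    rw [eq_comm]
    apply Finset.sum_subset
    · intro t ht
      simp only [Finset.mem_insert, Finset.mem_singleton] at ht
      rw [Finset.mem_Icc]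
      omega
    · intro t ht hnot
      rw [Finset.mem_Icc] at ht
      simp only [Finset.mem_insert, Finset.mem_singleton] at hnot
      push_neg at hnot
      have ht0 : 0 ≤ t := by omega
      lift t to ℕ using ht0
      rw [hSm t (by omega), mul_zero]
  rw [hhalf, hs5]
  -- evaluate the five-term sum
  have hne1 : (-2 : ℤ) ∉ ({-1, (n : ℤ), (n : ℤ) + 1, (n : ℤ) + 2} : Finset ℤ) := by
    simp only [Finset.mem_insert, Finset.mem_singleton]; omega
  have hne2 : (-1 : ℤ) ∉ ({(n : ℤ), (n : ℤ) + 1, (n : ℤ) + 2} : Finset ℤ) := by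
    simp only [Finset.mem_insert, Finset.mem_singleton]; omega
  have hne3 : ((n : ℤ)) ∉ ({(n : ℤ) + 1, (n : ℤ) + 2} : Finset ℤ) := by
    simp only [Finset.mem_insert, Finset.mem_singleton]; omega
  have hne4 : ((n : ℤ) + 1) ∉ ({(n : ℤ) + 2} : Finset ℤ) := by
    simp only [Finset.mem_singleton]; omega
  rw [Finset.sum_insert hne1, Finset.sum_insert hne2, Finset.sum_insert hne3,
    Finset.sum_insert hne4, Finset.sum_singleton]
  rw [show (2 * (-2) - (n:ℤ)) = -(n:ℤ) - 4 by ring, show (2 * (-1) - (n:ℤ)) = -(n:ℤ) - 2 by ring,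
    show (2 * (n:ℤ) - (n:ℤ)) = (n:ℤ) by ring, show (2 * ((n:ℤ)+1) - (n:ℤ)) = (n:ℤ) + 2 by ring,
    show (2 * ((n:ℤ)+2) - (n:ℤ)) = (n:ℤ) + 4 by ring]
  rw [hSn, hSn1, hSn2, hSneg1, hSneg2]
  have hγ2 : ∀ j, γ j ^ (-2 : ℤ) = (x j)⁻¹ := by
    intro j
    rw [show (-2 : ℤ) = -((2 : ℕ) : ℤ) from rfl, zpow_neg, zpow_natCast, hxk]
  have hsum4 : ∑ k, γ k ^ 4 = ∑ k, x k ^ 2 :=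
    Finset.sum_congr rfl fun k _ => by rw [hxk, ← pow_mul]
  rw [Finset.sum_congr rfl fun j (_ : j ∈ univ) => hγ2 j, hsum4]
  rw [pow_succ]
  ring
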